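/- The function x ↦ x^2 (ln x)^2 admits at each p > 0 the Taylor expansion x^2 ln^2 x = p^2 ln^2 p + 2 p ln p (ln p + 1)(x-p) + (ln^2 p + 3 ln p + 1)(x-p)^2 + 4 Σ_{m=1}^{∞} (-1)^{m+1} [ln p - S_{m-1} + 3/2] (x-p)^{m+2} / (m(m+1)(m+2) p^m), convergent for |x - p| < p, where S_k is the k-th harmonic number. -/

import Mathlib

/-- Harmonic numbers: `S k = ∑_{j=1}^k 1/j`, with `S 0 = 0`. -/
noncomputable def harmonicS (k : ℕ) : ℝ := ∑ j ∈ Finset.range k, 1 / ((j : ℝ) + 1)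

lemma harmonicS_succ (k : ℕ) : harmonicS (k + 1) = harmonicS k + 1 / ((k : ℝ) + 1) := by
  simp [harmonicS, Finset.sum_range_succ]

/-- Key lemma in normalized coordinates: expansion of `(1+t)² (L + ln(1+t))²`. -/
lemma key_expansion (L t : ℝ) (ht : |t| < 1) :
    HasSum
      (fun j : ℕ => 4 * (-1 : ℝ) ^ j * (L - harmonicS j + 3 / 2) * t ^ (j + 3) /
        (((j : ℝ) + 1) * ((j : ℝ) + 2) * ((j : ℝ) + 3)))
      ((1 + t) ^ 2 * (L + Real.log (1 + t)) ^ 2 -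
        (L ^ 2 + 2 * L * (L + 1) * t + (L ^ 2 + 3 * L + 1) * t ^ 2)) := by
  set u := Real.log (1 + t) with hu
  set a : ℕ → ℝ := fun n => (-1 : ℝ) ^ n * t ^ (n + 1) / ((n : ℝ) + 1) with ha_def
  -- log series
  have hlog := Real.hasSum_pow_div_log_of_abs_lt_one (x := -t) (by rwa [abs_neg])
  have ha : HasSum a u := by
    have h := hlog.neg
    rw [sub_neg_eq_add] at h
    rw [neg_neg] at h
    have hfun : (fun n : ℕ => -((-t) ^ (n + 1) / ((n : ℝ) + 1))) = a := by
      funext n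
      have hnp : (-t) ^ (n + 1) = (-1 : ℝ) ^ (n + 1) * t ^ (n + 1) := by
        rw [neg_pow]
      simp only [ha_def]
      rw [hnp, pow_succ]
      ring
    rwa [hfun] at h
  -- absolute summability of a
  have hsa : Summable fun n => ‖a n‖ := by
    have hgeo : Summable fun n : ℕ => |t| ^ n :=
      summable_geometric_of_lt_one (abs_nonneg t) ht
    refine Summable.of_nonneg_of_le (fun n => norm_nonneg _) (fun n => ?_) hgeo
    have h1 : ‖a n‖ = |t| ^ (n + 1) / ((n : ℝ) + 1) := by
      simp only [ha_def]
      rw [Real.norm_eq_abs, abs_div, abs_mul, abs_pow, abs_pow, abs_neg, abs_one,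
        one_pow, one_mul, abs_of_pos (by positivity : (0 : ℝ) < (n : ℝ) + 1)]
    rw [h1]
    have h2 : |t| ^ (n + 1) ≤ |t| ^ n :=
      pow_le_pow_of_le_one (abs_nonneg t) ht.le (by omega)
    have h3 : |t| ^ (n + 1) / ((n : ℝ) + 1) ≤ |t| ^ (n + 1) := by
      apply div_le_self (by positivity)
      have : (1 : ℝ) ≤ (n : ℝ) + 1 := by
        have := Nat.cast_nonneg (α := ℝ) n
        linarith
      linarith
    linarith
  -- Cauchy product
  set c : ℕ → ℝ := fun n => ∑ k ∈ Finset.range (n + 1), a k * a (n - k) with hc_def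
  have hc : HasSum c (u * u) := by
    have h := hasSum_sum_range_mul_of_summable_norm hsa hsa
    rwa [ha.tsum_eq] at h
  -- closed form of the Cauchy product
  have hcform : ∀ n : ℕ,
      c n = (-1 : ℝ) ^ n * 2 * harmonicS (n + 1) * t ^ (n + 2) / ((n : ℝ) + 2) := by
    intro n
    have hterm : ∀ k ∈ Finset.range (n + 1),
        a k * a (n - k) = (-1 : ℝ) ^ n * t ^ (n + 2) * (1 / ((n : ℝ) + 2)) *
          (1 / ((k : ℝ) + 1) + 1 / (((n - k : ℕ) : ℝ) + 1)) := by
      intro k hk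
      have hk' : k ≤ n := Nat.lt_succ_iff.mp (Finset.mem_range.mp hk)
      obtain ⟨m, rfl⟩ : ∃ m, n = k + m := ⟨n - k, by omega⟩
      have hmk : k + m - k = m := by omega
      rw [hmk]
      simp only [ha_def]
      have h1 : ((k : ℝ) + 1) ≠ 0 := by positivity
      have h2 : ((m : ℝ) + 1) ≠ 0 := by positivity
      have h3 : (((k + m : ℕ) : ℝ) + 2) ≠ 0 := by positivity
      push_cast at h3 ⊢
      field_simp
      ring
    show (∑ k ∈ Finset.range (n + 1), a k * a (n - k)) = _
    rw [Finset.sum_congr rfl hterm, ← Finset.mul_sum, Finset.sum_add_distrib]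
    have hrefl : ∑ k ∈ Finset.range (n + 1), 1 / (((n - k : ℕ) : ℝ) + 1) =
        ∑ k ∈ Finset.range (n + 1), 1 / ((k : ℝ) + 1) := by
      have := Finset.sum_range_reflect (fun k : ℕ => 1 / ((k : ℝ) + 1)) (n + 1)
      simpa using this
    rw [hrefl]
    have hhs : ∑ k ∈ Finset.range (n + 1), 1 / ((k : ℝ) + 1) = harmonicS (n + 1) := rfl
    rw [hhs]
    ring
  -- shifted pieces
  have hA1 : HasSum (fun n => a (n + 1)) (u - t) := by
    have h := (hasSum_nat_add_iff' (f := a) 1).mpr ha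
    have hs : ∑ i ∈ Finset.range 1, a i = t := by
      simp [ha_def]
    rwa [hs] at h
  have hA2 : HasSum (fun n => a (n + 2)) (u - (t - t ^ 2 / 2)) := by
    have h := (hasSum_nat_add_iff' (f := a) 2).mpr ha
    have hs : ∑ i ∈ Finset.range 2, a i = t - t ^ 2 / 2 := by
      rw [Finset.sum_range_succ, Finset.sum_range_one]
      simp only [ha_def]
      norm_num
      ring
    rwa [hs] at h
  have hC1 : HasSum (fun n => c (n + 1)) (u * u - t ^ 2) := by
    have h := (hasSum_nat_add_iff' (f := c) 1).mpr hc
    have hs : ∑ i ∈ Finset.range 1, c i = t ^ 2 := by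
      rw [Finset.sum_range_one, hcform 0]
      have : harmonicS 1 = 1 := by simp [harmonicS]
      rw [this]
      norm_num
    rwa [hs] at h
  -- the ragged piece d
  set d : ℕ → ℝ := fun n => match n with | 0 => 0 | Nat.succ j => t ^ 2 * c j with hd_def
  have hD : HasSum d (t ^ 2 * (u * u)) := by
    have h0 : HasSum (fun n => t ^ 2 * c n) (t ^ 2 * (u * u)) := hc.mul_left _
    have h1 : HasSum (fun n => d (n + 1)) (t ^ 2 * (u * u) - ∑ i ∈ Finset.range 1, d i) := by
      simpa [hd_def] using h0
    exact (hasSum_nat_add_iff' 1).mp h1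
  -- combine
  have P1 := hA2.mul_left (2 * L)
  have P2 := hA1.mul_left (4 * L * t)
  have P3 := ha.mul_left (2 * L * t ^ 2)
  have P5 := hc.mul_left (2 * t)
  have H := ((((P1.add P2).add P3).add hC1).add P5).add hD
  convert H using 1
  · rfl
  · funext j
    cases j with
    | zero =>
      rw [hcform 0, hcform 1]
      have h1 : harmonicS 1 = 1 := by simp [harmonicS]
      have h2 : harmonicS 2 = 3 / 2 := by
        rw [harmonicS_succ, h1]; norm_num
      have h0 : harmonicS 0 = 0 := by simp [harmonicS]
      simp only [ha_def, hd_def, h0, h1, h2]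
      norm_num
      ring
    | succ k =>
      have hd1 : d (k + 1) = t ^ 2 * c k := rfl
      rw [hd1, hcform (k + 1 + 1), hcform (k + 1), hcform k]
      simp only [ha_def]
      rw [show k + 1 + 1 + 1 = k + 3 from rfl, show k + 1 + 1 = k + 2 from rfl,
        harmonicS_succ (k + 2), harmonicS_succ (k + 1)]
      push_cast
      have h2 : ((k : ℝ) + 2) ≠ 0 := by positivity
      have h3 : ((k : ℝ) + 3) ≠ 0 := by positivity
      have h4 : ((k : ℝ) + 4) ≠ 0 := by positivity
      field_simp
      ring
  · ring
/-- Taylor expansion of `x ↦ x² (ln x)²` around `p > 0`, convergent for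
`|x - p| < p`. The series is indexed by `j` with the paper's `m = j + 1 ≥ 1`. -/
theorem taylor_sq_log_sq (p x : ℝ) (hp : 0 < p) (hx : |x - p| < p) :
    HasSum
      (fun j : ℕ =>
        4 * (-1 : ℝ) ^ (j + 2) * (Real.log p - harmonicS j + 3 / 2) *
          (x - p) ^ (j + 3) /
          (((j : ℝ) + 1) * ((j : ℝ) + 2) * ((j : ℝ) + 3) * p ^ (j + 1)))
      (x ^ 2 * (Real.log x) ^ 2 -
        (p ^ 2 * (Real.log p) ^ 2 +
          2 * p * Real.log p * (Real.log p + 1) * (x - p) +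
          ((Real.log p) ^ 2 + 3 * Real.log p + 1) * (x - p) ^ 2)) := by
  set L := Real.log p with hL
  set t : ℝ := (x - p) / p with htdef
  clear_value t
  have hp' : p ≠ 0 := ne_of_gt hp
  have ht : |t| < 1 := by
    rw [htdef, abs_div, abs_of_pos hp]
    exact (div_lt_one hp).mpr hx
  have hx0 : 0 < x := by
    have := abs_lt.mp hx
    linarith [this.1]
  have hxp : x - p = p * t := by
    rw [htdef]; field_simp
  have h1t : 1 + t = x / p := by
    rw [htdef]; field_simp; ring
  have hulog : Real.log (1 + t) = Real.log x - L := by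
    rw [h1t, Real.log_div (ne_of_gt hx0) hp', hL]
  have H := (key_expansion L t ht).mul_left (p ^ 2)
  convert H using 1
  · rfl
  · funext j
    have hj1 : ((j : ℝ) + 1) ≠ 0 := by positivity
    have hj2 : ((j : ℝ) + 2) ≠ 0 := by positivity
    have hj3 : ((j : ℝ) + 3) ≠ 0 := by positivity
    have hpj : (p : ℝ) ^ (j + 1) ≠ 0 := pow_ne_zero _ hp'
    rw [hxp, mul_pow, show j + 3 = (j + 1) + 2 from rfl, pow_add]
    field_simp
    ring
  · rw [hulog, h1t, htdef]
    field_simp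
    ring
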